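/- arXiv:1912.00267 — 3 statements merged into one kernel-verified Lean document; each statement's English description precedes it below -/
import Mathlib

section
/- Assume (|v|²/2 + V(|v|))/|v| → +∞ as |v| → ∞ and let M_u(v) = Z(σ,u)^{-1} exp(−Φ_u(v)/σ). For any u ∈ ℝ^d, the vector ∫_{ℝ^d} v M_u(v) dv lies in ℝ₊·u, i.e. it equals a nonnegative scalar times u; moreover when u ≠ 0 the scalar ∫ M_u(v)(v·u) dv is strictly positive. -/
open MeasureTheory Real Filter
open scoped RealInnerProductSpace

lemma exp_diff_mul_nonneg (a b : ℝ) : 0 ≤ (a - b) * (Real.exp a - Real.exp b) := by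
  rcases le_total a b with h | h
  · have := Real.exp_le_exp.mpr h; nlinarith
  · have := Real.exp_le_exp.mpr h; nlinarith

lemma exp_diff_mul_pos {a b : ℝ} (h : a ≠ b) :
    0 < (a - b) * (Real.exp a - Real.exp b) := by
  rcases lt_or_gt_of_ne h with h | h
  · have := Real.exp_lt_exp.mpr h; nlinarith
  · have := Real.exp_lt_exp.mpr h; nlinarith

set_option maxHeartbeats 1000000 in
/-- The mean velocity of the von Mises-Fisher type distribution
`M_u(v) = Z(σ,u)⁻¹ exp(−Φ_u(v)/σ)` is a nonnegative multiple of `u`, and when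
`u ≠ 0` the scalar `∫ M_u(v) (v·u) dv` is strictly positive. -/
theorem stmt4 {d : ℕ} (hd : 1 ≤ d) (V : ℝ → ℝ) (hVmeas : Measurable V)
    (hcoerc : Tendsto (fun r : ℝ => (r ^ 2 / 2 + V r) / r) atTop atTop)
    (σ : ℝ) (hσ : 0 < σ) (u : EuclideanSpace ℝ (Fin d))
    (Z : ℝ) (hZ : Z = ∫ v : EuclideanSpace ℝ (Fin d),
      Real.exp (-((‖v - u‖ ^ 2 / 2 + V ‖v‖) / σ)))
    (hZpos : 0 < Z)
    (M : EuclideanSpace ℝ (Fin d) → ℝ)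
    (hM : M = fun v => Z⁻¹ * Real.exp (-((‖v - u‖ ^ 2 / 2 + V ‖v‖) / σ))) :
    (∃ c : ℝ, 0 ≤ c ∧ (∫ v, M v • v) = c • u) ∧
      (u ≠ 0 → 0 < ∫ v, M v * ⟪v, u⟫) := by
  set φ : EuclideanSpace ℝ (Fin d) → ℝ := fun v => Real.exp (-((‖v - u‖ ^ 2 / 2 + V ‖v‖) / σ)) with hφ
  have hφpos : ∀ v, 0 < φ v := fun v => Real.exp_pos _
  have hφmeas : Measurable φ :=
    Real.measurable_exp.comp
      (((((measurable_id.sub_const u).norm.pow_const 2).div_const 2).add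
        (hVmeas.comp measurable_norm)).div_const σ).neg
  have hMmeas : Measurable M := by rw [hM]; exact measurable_const.mul hφmeas
  have hMeq : ∀ v, M v = Z⁻¹ * φ v := fun v => by rw [hM]
  have hMpos : ∀ v, 0 < M v := fun v => by
    rw [hMeq]; exact mul_pos (inv_pos.mpr hZpos) (hφpos v)
  -- integrability of φ
  have hIntφ : Integrable φ := by
    by_contra hni
    rw [integral_undef hni] at hZ
    linarith
  -- coercivity radius
  obtain ⟨R₀, hR₀⟩ := eventually_atTop.mp
    (hcoerc.eventually_ge_atTop (‖u‖ + σ * (d + 2)))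
  set R₁ : ℝ := max R₀ 1 with hR₁
  have hR₁pos : (0:ℝ) < R₁ := lt_of_lt_of_le one_pos (le_max_right _ _)
  -- pointwise domination
  have hbd : ∀ v : EuclideanSpace ℝ (Fin d), ‖v‖ * φ v ≤ R₁ * φ v + (1 + ‖v‖) ^ (-((d:ℝ) + 1)) := by
    intro v
    have hrpow : (0:ℝ) ≤ (1 + ‖v‖) ^ (-((d:ℝ) + 1)) :=
      Real.rpow_nonneg (by positivity) _
    rcases le_or_gt ‖v‖ R₁ with hle | hgt
    · have := mul_le_mul_of_nonneg_right hle (hφpos v).le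
      linarith
    · set r := ‖v‖ with hr
      have hr1 : (1:ℝ) ≤ r := le_trans (le_max_right _ _) hgt.le
      have hrpos : (0:ℝ) < r := by linarith
      have hsl : ‖u‖ + σ * (d + 2) ≤ (r ^ 2 / 2 + V r) / r :=
        hR₀ r (le_trans (le_max_left _ _) hgt.le)
      have hsl' : (‖u‖ + σ * (d + 2)) * r ≤ r ^ 2 / 2 + V r := by
        rwa [← le_div_iff₀ hrpos]
      have hin : ⟪v, u⟫ ≤ r * ‖u‖ := real_inner_le_norm v u
      have hns : ‖v - u‖ ^ 2 = ‖v‖ ^ 2 - 2 * ⟪v, u⟫ + ‖u‖ ^ 2 := norm_sub_sq_real v u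
      have hΦ : σ * ((d + 2) * r) ≤ ‖v - u‖ ^ 2 / 2 + V r := by
        nlinarith [sq_nonneg ‖u‖]
      have hφle : φ v ≤ Real.exp (-(((d:ℝ) + 2) * r)) := by
        apply Real.exp_le_exp.mpr
        rw [neg_le_neg_iff]
        rw [le_div_iff₀ hσ] at *
        nlinarith
      have key : r * (1 + r) ^ (d + 1) ≤ Real.exp (((d:ℝ) + 2) * r) := by
        have h1 : 1 + r ≤ Real.exp r := by
          have := Real.add_one_le_exp r; linarith
        have h2 : r ≤ Real.exp r := by linarith
        calc r * (1 + r) ^ (d + 1) ≤ Real.exp r * (Real.exp r) ^ (d + 1) := by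
              apply mul_le_mul h2 (pow_le_pow_left₀ (by linarith) h1 _) (by positivity) (by positivity)
          _ = Real.exp (((d:ℝ) + 2) * r) := by
              rw [← Real.exp_nat_mul, ← Real.exp_add]
              congr 1
              push_cast
              ring
      have hrpoweq : (1 + r) ^ (-((d:ℝ) + 1)) = ((1 + r) ^ (d + 1))⁻¹ := by
        rw [Real.rpow_neg (by positivity)]
        congr 1
        rw [← Real.rpow_natCast (1 + r) (d + 1)]
        push_cast
        ring_nf
      have hmain : r * φ v ≤ (1 + r) ^ (-((d:ℝ) + 1)) := by
        rw [hrpoweq]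
        have h3 : r * φ v ≤ r * Real.exp (-(((d:ℝ) + 2) * r)) :=
          mul_le_mul_of_nonneg_left hφle hrpos.le
        refine le_trans h3 ?_
        rw [Real.exp_neg, ← div_eq_mul_inv, div_le_iff₀ (Real.exp_pos _),
          inv_mul_eq_div, le_div_iff₀ (by positivity : (0:ℝ) < (1 + r) ^ (d + 1))]
        nlinarith [key]
      have : 0 ≤ R₁ * φ v := by positivity
      linarith
  clear_value φ
  -- integrable majorant
  have hfr : (Module.finrank ℝ (EuclideanSpace ℝ (Fin d)) : ℝ) < (d:ℝ) + 1 := by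
    rw [finrank_euclideanSpace, Fintype.card_fin]
    linarith
  have hgint : Integrable (fun v : EuclideanSpace ℝ (Fin d) => R₁ * φ v + (1 + ‖v‖) ^ (-((d:ℝ) + 1))) :=
    (hIntφ.const_mul R₁).add (integrable_one_add_norm hfr)
  have hIntnφ : Integrable (fun v : EuclideanSpace ℝ (Fin d) => ‖v‖ * φ v) := by
    refine hgint.mono' (measurable_norm.mul hφmeas).aestronglyMeasurable
      (ae_of_all _ fun v => ?_)
    rw [Real.norm_of_nonneg (mul_nonneg (norm_nonneg v) (hφpos v).le)]
    exact hbd v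
  -- integrability of the two integrands
  have hinnermeas : Measurable fun v : EuclideanSpace ℝ (Fin d) => ⟪v, u⟫ :=
    (continuous_id.inner continuous_const).measurable
  have hIntf : Integrable (fun v : EuclideanSpace ℝ (Fin d) => M v * ⟪v, u⟫) := by
    refine (hIntnφ.const_mul (Z⁻¹ * ‖u‖)).mono'
      (hMmeas.mul hinnermeas).aestronglyMeasurable (ae_of_all _ fun v => ?_)
    rw [Real.norm_eq_abs, abs_mul, abs_of_pos (hMpos v), hMeq]
    have h1 : |⟪v, u⟫| ≤ ‖v‖ * ‖u‖ := abs_real_inner_le_norm v u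
    have h2 : 0 < Z⁻¹ := inv_pos.mpr hZpos
    have := mul_le_mul_of_nonneg_left h1 (mul_pos h2 (hφpos v)).le
    calc Z⁻¹ * φ v * |⟪v, u⟫| ≤ Z⁻¹ * φ v * (‖v‖ * ‖u‖) := by
          exact mul_le_mul_of_nonneg_left h1
            (mul_nonneg (inv_pos.mpr hZpos).le (hφpos v).le)
      _ = Z⁻¹ * ‖u‖ * (‖v‖ * φ v) := by ring
  have hIntMv : Integrable (fun v : EuclideanSpace ℝ (Fin d) => M v • v) := by
    refine (hIntnφ.const_mul Z⁻¹).mono'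
      (hMmeas.smul measurable_id).aestronglyMeasurable (ae_of_all _ fun v => ?_)
    rw [norm_smul, Real.norm_eq_abs, abs_of_pos (hMpos v), hMeq]
    calc Z⁻¹ * φ v * ‖v‖ = Z⁻¹ * (‖v‖ * φ v) := by ring
      _ ≤ Z⁻¹ * (‖v‖ * φ v) := le_refl _
  -- reflection in the line spanned by u
  set K : Submodule ℝ (EuclideanSpace ℝ (Fin d)) := ℝ ∙ u with hK
  set T := K.reflection with hT
  have hTu : T u = u := by
    rw [hT]
    exact Submodule.reflection_mem_subspace_eq_self (Submodule.mem_span_singleton_self u)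
  have hMT : ∀ v, M (T v) = M v := by
    intro v
    have h1 : ‖T v - u‖ = ‖v - u‖ := by
      conv_lhs => rw [← hTu, ← map_sub]
      exact T.norm_map _
    have h2 : ‖T v‖ = ‖v‖ := T.norm_map v
    rw [hM]
    simp only [h1, h2]
  have hmpT : MeasurePreserving T := T.measurePreserving
  have hembT : MeasurableEmbedding T := T.toHomeomorph.measurableEmbedding
  set J : ℝ := ∫ v, M v * ⟪v, u⟫ with hJ
  clear_value J
  set c : ℝ := J * (‖u‖ ^ 2)⁻¹ with hc
  clear_value c
  set g : EuclideanSpace ℝ (Fin d) → ℝ := fun v => M v * (⟪u, v⟫ / ‖u‖ ^ 2) with hg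
  clear_value g
  have hgeq : ∀ v, g v = (M v * ⟪v, u⟫) * (‖u‖ ^ 2)⁻¹ := by
    intro v
    rw [hg]
    simp only [real_inner_comm u v]
    ring
  have hgint : Integrable g := by
    have := hIntf.mul_const ((‖u‖ ^ 2)⁻¹)
    exact this.congr (ae_of_all _ fun v => (hgeq v).symm)
  have hsplit : ∀ v, M v • T v = (2 * g v) • u - M v • v := by
    intro v
    have hPv : (K.starProjection v : EuclideanSpace ℝ (Fin d))
        = (⟪u, v⟫ / ‖u‖ ^ 2) • u := Submodule.starProjection_singleton ℝ v
    rw [hT, Submodule.reflection_apply, hPv, hg]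
    simp only
    module
  clear_value T
  have hI1 : (∫ v, M v • v) = ∫ v, M v • T v := by
    calc (∫ v, M v • v) = ∫ v, M (T v) • (T v) :=
          (hmpT.integral_comp hembT (fun w => M w • w)).symm
      _ = ∫ v, M v • T v := by simp only [hMT]
  have hI2 : (∫ v, M v • T v) = (2 * (J * (‖u‖ ^ 2)⁻¹)) • u - ∫ v, M v • v := by
    have e1 : Integrable (fun v => (2 * g v) • u) := ((hgint.const_mul 2).smul_const u)
    calc (∫ v, M v • T v) = ∫ v, ((2 * g v) • u - M v • v) := by
          simp only [hsplit]
      _ = (∫ v, (2 * g v) • u) - ∫ v, M v • v := integral_sub e1 hIntMv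
      _ = (2 * (J * (‖u‖ ^ 2)⁻¹)) • u - ∫ v, M v • v := by
          rw [integral_smul_const, integral_const_mul]
          have hgJ : (∫ v, g v) = J * (‖u‖ ^ 2)⁻¹ := by
            rw [hJ, ← integral_mul_const]
            exact integral_congr_ae (ae_of_all _ fun v => hgeq v)
          rw [hgJ]
  have hIeq : (∫ v, M v • v) = c • u := by
    have hA := hI1.trans hI2
    rw [eq_sub_iff_add_eq] at hA
    have h3 : (2:ℝ) • (∫ v, M v • v) = (2:ℝ) • (c • u) := by
      rw [two_smul, hA, hc, smul_smul]
    exact smul_right_injective _ two_ne_zero h3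
  -- reflection sending u to -u
  set S := T.trans (LinearIsometryEquiv.neg ℝ : EuclideanSpace ℝ (Fin d) ≃ₗᵢ[ℝ] EuclideanSpace ℝ (Fin d)) with hS
  have hSapp : ∀ v, S v = -(T v) := fun v => rfl
  have hmpS : MeasurePreserving S := S.measurePreserving
  have hembS : MeasurableEmbedding S := S.toHomeomorph.measurableEmbedding
  set f : EuclideanSpace ℝ (Fin d) → ℝ := fun v => M v * ⟪v, u⟫ with hf
  have hfS : ∀ v, f (S v) =
      -(Z⁻¹ * Real.exp (-((‖v + u‖ ^ 2 / 2 + V ‖v‖) / σ)) * ⟪v, u⟫) := by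
    intro v
    have hin : ⟪S v, u⟫ = -⟪v, u⟫ := by
      rw [hSapp, inner_neg_left]
      conv_lhs => rw [← hTu]
      rw [T.inner_map_map]
    have hn1 : ‖S v - u‖ = ‖v + u‖ := by
      have : S v - u = -(T (v + u)) := by
        rw [hSapp, map_add, hTu]
        abel
      rw [this, norm_neg, T.norm_map]
    have hn2 : ‖S v‖ = ‖v‖ := by rw [hSapp, norm_neg, T.norm_map]
    rw [hf]
    simp only [hM, hin, hn1, hn2]
    ring
  have h4inner : ∀ v : EuclideanSpace ℝ (Fin d),
      ‖v + u‖ ^ 2 - ‖v - u‖ ^ 2 = 4 * ⟪v, u⟫ := by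
    intro v
    rw [norm_add_sq_real, norm_sub_sq_real]
    ring
  have hkey : ∀ v : EuclideanSpace ℝ (Fin d),
      f v + f (S v) = Z⁻¹ * ⟪v, u⟫ *
        (Real.exp (-((‖v - u‖ ^ 2 / 2 + V ‖v‖) / σ))
          - Real.exp (-((‖v + u‖ ^ 2 / 2 + V ‖v‖) / σ))) := by
    intro v
    rw [hfS v, hf]
    simp only [hM]
    ring
  have hnn : ∀ v, 0 ≤ f v + f (S v) := by
    intro v
    rw [hkey v]
    have h4 := h4inner v
    set t := (⟪v, u⟫ : ℝ) with htdef
    set A := -((‖v - u‖ ^ 2 / 2 + V ‖v‖) / σ) with hA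
    set B := -((‖v + u‖ ^ 2 / 2 + V ‖v‖) / σ) with hB
    have hAB : A - B = 2 * t / σ := by
      rw [hA, hB]
      have hr : -((‖v - u‖ ^ 2 / 2 + V ‖v‖) / σ) - -((‖v + u‖ ^ 2 / 2 + V ‖v‖) / σ)
          = ((‖v + u‖ ^ 2 - ‖v - u‖ ^ 2) / 2) / σ := by ring
      rw [hr, h4]
      ring
    clear_value t A B
    have hZi : 0 < Z⁻¹ := inv_pos.mpr hZpos
    have hzs : 0 < Z⁻¹ * σ := mul_pos hZi hσ
    have ht : t = σ * (A - B) / 2 := by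
      rw [hAB]
      field_simp
    rw [ht]
    nlinarith [mul_nonneg hzs.le (exp_diff_mul_nonneg A B)]
  have hpos : ∀ v, ⟪v, u⟫ ≠ 0 → 0 < f v + f (S v) := by
    intro v htne
    rw [hkey v]
    have h4 := h4inner v
    set t := (⟪v, u⟫ : ℝ) with htdef
    set A := -((‖v - u‖ ^ 2 / 2 + V ‖v‖) / σ) with hA
    set B := -((‖v + u‖ ^ 2 / 2 + V ‖v‖) / σ) with hB
    have hAB : A - B = 2 * t / σ := by
      rw [hA, hB]
      have hr : -((‖v - u‖ ^ 2 / 2 + V ‖v‖) / σ) - -((‖v + u‖ ^ 2 / 2 + V ‖v‖) / σ)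
          = ((‖v + u‖ ^ 2 - ‖v - u‖ ^ 2) / 2) / σ := by ring
      rw [hr, h4]
      ring
    have htne' : t ≠ 0 := htne
    clear_value t A B
    have hZi : 0 < Z⁻¹ := inv_pos.mpr hZpos
    have hzs : 0 < Z⁻¹ * σ := mul_pos hZi hσ
    have ht : t = σ * (A - B) / 2 := by
      rw [hAB]
      field_simp
    have hABne : A ≠ B := by
      intro heq
      apply htne'
      rw [ht, heq]
      ring
    rw [ht]
    nlinarith [mul_pos hzs (exp_diff_mul_pos hABne)]
  have hIntfS : Integrable (f ∘ S) := (hmpS.integrable_comp_emb hembS).mpr hIntf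
  have hIntsum : Integrable (fun v => f v + f (S v)) := hIntf.add hIntfS
  have hJS : (∫ v, f (S v)) = J := by
    rw [hJ]
    exact hmpS.integral_comp hembS f
  have hfvJ : (∫ v, f v) = J := by rw [hJ]
  have hsumJ : (∫ v, (f v + f (S v))) = 2 * J := by
    have hadd : (∫ v, (f v + f (S v))) = (∫ v, f v) + ∫ v, f (S v) :=
      integral_add hIntf hIntfS
    rw [hadd, hJS, hfvJ]
    ring
  have hJnn : 0 ≤ J := by
    have h0 : 0 ≤ ∫ v, (f v + f (S v)) := integral_nonneg hnn
    rw [hsumJ] at h0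
    linarith
  refine ⟨⟨c, ?_, hIeq⟩, ?_⟩
  · rw [hc]
    exact mul_nonneg hJnn (inv_nonneg.mpr (sq_nonneg _))
  · intro hu
    rw [← hfvJ]
    -- null set of vanishing inner product
    have hnull : volume {v : EuclideanSpace ℝ (Fin d) | ⟪v, u⟫ = 0} = 0 := by
      have hset : {v : EuclideanSpace ℝ (Fin d) | ⟪v, u⟫ = 0}
          = ((ℝ ∙ u)ᗮ : Submodule ℝ (EuclideanSpace ℝ (Fin d))) := by
        ext v
        simp only [Set.mem_setOf_eq, SetLike.mem_coe,
          Submodule.mem_orthogonal_singleton_iff_inner_right]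
        rw [real_inner_comm]
      rw [hset]
      apply Measure.addHaar_submodule
      intro htop
      have : u ∈ (ℝ ∙ u)ᗮ := htop ▸ Submodule.mem_top
      exact hu (inner_self_eq_zero.mp (this u (Submodule.mem_span_singleton_self u)))
    have hsupp : 0 < volume (Function.support fun v => f v + f (S v)) := by
      have hsub : {v : EuclideanSpace ℝ (Fin d) | ⟪v, u⟫ = 0}ᶜ ⊆
          Function.support fun v => f v + f (S v) := by
        intro v hv
        exact (hpos v hv).ne'
      by_contra hcon
      push_neg at hcon
      have hc0 : volume ({v : EuclideanSpace ℝ (Fin d) | ⟪v, u⟫ = 0}ᶜ) = 0 :=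
        le_antisymm (le_trans (measure_mono hsub) (le_of_not_gt (by simpa using hcon))) zero_le
      have huniv : volume (Set.univ : Set (EuclideanSpace ℝ (Fin d))) = 0 := by
        have := measure_union_le (μ := volume)
          {v : EuclideanSpace ℝ (Fin d) | ⟪v, u⟫ = 0}
          {v : EuclideanSpace ℝ (Fin d) | ⟪v, u⟫ = 0}ᶜ
        rw [Set.union_compl_self, hnull, hc0] at this
        simpa using this
      have hop : (0:ENNReal) < volume (Set.univ : Set (EuclideanSpace ℝ (Fin d))) :=
        isOpen_univ.measure_pos volume ⟨0, trivial⟩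
      rw [huniv] at hop
      exact lt_irrefl _ hop
    have hintpos : 0 < ∫ v, (f v + f (S v)) :=
      (integral_pos_iff_support_of_nonneg hnn hIntsum).mpr hsupp
    rw [hsumJ] at hintpos
    have : 0 < J := by linarith
    rw [← hfvJ] at this
    exact this
end

section
/- Assume (|v|²/2 + V(|v|))/|v| → +∞ as |v| → ∞, let Ω ∈ S^{d-1}, u = lΩ with l ≥ 0, and M_u(v) = Z(σ,l)^{-1} exp(−Φ_u(v)/σ). Then σ ∂_l Z(σ,l) = Z(σ,l) ∫_{ℝ^d} M_u(v)(v·Ω − l) dv. Consequently, ∫ M_u(v)(v − u) dv = 0 if and only if l is a critical point of Z(σ,·). -/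
set_option maxHeartbeats 1000000

open MeasureTheory Real Filter
open scoped RealInnerProductSpace

lemma aux_integrable {d : ℕ} (g : ℝ → ℝ) (hg : Continuous g)
    (hco : Tendsto (fun r : ℝ => g r / r) atTop atTop) (C : ℝ) (hC : 1 ≤ C) :
    Integrable (fun v : EuclideanSpace ℝ (Fin d) => (‖v‖ + C) * Real.exp (-g ‖v‖)) := by
  obtain ⟨R, hR⟩ := eventually_atTop.mp (hco.eventually_ge_atTop ((d : ℝ) + 2))
  set R₂ : ℝ := max (max R C) 1 with hR₂
  have hR₂1 : (1 : ℝ) ≤ R₂ := le_max_right _ _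
  have hR₂C : C ≤ R₂ := le_trans (le_max_right R C) (le_max_left _ _)
  have hR₂R : R ≤ R₂ := le_trans (le_max_left R C) (le_max_left _ _)
  have hφcont : Continuous (fun r : ℝ => (r + C) * Real.exp (-g r) * (1 + r) ^ (d + 1)) := by
    exact ((continuous_id.add continuous_const).mul
      (Real.continuous_exp.comp hg.neg)).mul ((continuous_const.add continuous_id).pow _)
  obtain ⟨x, -, hx⟩ := (isCompact_Icc (a := (0:ℝ)) (b := R₂)).exists_isMaxOn
    ⟨0, by constructor <;> [rfl; linarith]⟩ hφcont.continuousOn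
  set K : ℝ := max ((x + C) * Real.exp (-g x) * (1 + x) ^ (d + 1)) (2 ^ (d + 2)) with hK
  have hbound : ∀ r : ℝ, 0 ≤ r → (r + C) * Real.exp (-g r) * (1 + r) ^ (d + 1) ≤ K := by
    intro r hr
    rcases le_total r R₂ with h | h
    · exact le_trans (hx ⟨hr, h⟩) (le_max_left _ _)
    · refine le_trans ?_ (le_max_right _ _)
      have hr1 : (1 : ℝ) ≤ r := le_trans hR₂1 h
      have hrC : C ≤ r := le_trans hR₂C h
      have hr0 : (0 : ℝ) < r := by linarith
      have hgr : ((d : ℝ) + 2) * r ≤ g r := by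
        have := hR r (le_trans hR₂R h)
        exact (le_div_iff₀ hr0).mp this
      have e1 : Real.exp (-(((d : ℝ) + 2) * r)) = Real.exp (-r) ^ (d + 2) := by
        rw [← Real.exp_nat_mul]; congr 1; push_cast; ring
      have hre : r * Real.exp (-r) ≤ 1 := by
        rw [Real.exp_neg, mul_comm, ← div_eq_inv_mul, div_le_one (Real.exp_pos r)]
        linarith [Real.add_one_le_exp r]
      calc (r + C) * Real.exp (-g r) * (1 + r) ^ (d + 1)
          ≤ (2 * r) * Real.exp (-(((d : ℝ) + 2) * r)) * (2 * r) ^ (d + 1) := by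
            refine mul_le_mul (mul_le_mul (by linarith)
              (Real.exp_le_exp.mpr (by linarith)) (Real.exp_pos _).le (by positivity))
              (pow_le_pow_left₀ (by positivity) (by linarith) _) (by positivity) (by positivity)
        _ = ((2 * r) * Real.exp (-r)) ^ (d + 2) := by
            rw [e1]; ring
        _ ≤ 2 ^ (d + 2) := by
            apply pow_le_pow_left₀ (by positivity)
            nlinarith
  have hmain : ∀ v : EuclideanSpace ℝ (Fin d),
      ‖(‖v‖ + C) * Real.exp (-g ‖v‖)‖ ≤ K * (1 + ‖v‖) ^ (-((d : ℝ) + 1)) := by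
    intro v
    have h1 : (0 : ℝ) < 1 + ‖v‖ := by positivity
    have h2 : (1 + ‖v‖) ^ (-((d : ℝ) + 1)) = ((1 + ‖v‖) ^ (d + 1 : ℕ))⁻¹ := by
      rw [← Real.rpow_natCast (1 + ‖v‖) (d + 1), ← Real.rpow_neg h1.le]
      norm_num
    rw [Real.norm_eq_abs, abs_of_nonneg (by positivity), h2, ← div_eq_mul_inv,
      le_div_iff₀ (by positivity)]
    exact hbound ‖v‖ (norm_nonneg v)
  have hint : Integrable (fun v : EuclideanSpace ℝ (Fin d) =>
      K * (1 + ‖v‖) ^ (-((d : ℝ) + 1))) := by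
    refine (integrable_one_add_norm ?_).const_mul K
    rw [finrank_euclideanSpace_fin]; linarith
  exact hint.mono' (((continuous_norm.add continuous_const).mul
    (Real.continuous_exp.comp (hg.comp continuous_norm).neg)).aestronglyMeasurable)
    (ae_of_all _ hmain)

/-- For `u = lΩ`, `σ ∂_l Z(σ,l) = Z(σ,l) ∫ M_u(v)(v·Ω − l) dv`; consequently
`M_u` is an equilibrium, i.e. `∫ M_u(v)(v − u) dv = 0`, iff `l` is a critical
point of `Z(σ,·)`. -/
theorem stmt5 {d : ℕ} (hd : 2 ≤ d) (V : ℝ → ℝ) (hV : Continuous V)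
    (hcoerc : Tendsto (fun r : ℝ => (r ^ 2 / 2 + V r) / r) atTop atTop)
    (σ : ℝ) (hσ : 0 < σ) (Ω : EuclideanSpace ℝ (Fin d)) (hΩ : ‖Ω‖ = 1)
    (l : ℝ) (hl : 0 ≤ l)
    (Z : ℝ → ℝ)
    (hZ : ∀ l' : ℝ, Z l' = ∫ v : EuclideanSpace ℝ (Fin d),
      Real.exp (-((‖v - l' • Ω‖ ^ 2 / 2 + V ‖v‖) / σ)))
    (M : EuclideanSpace ℝ (Fin d) → ℝ)
    (hM : M = fun v => (Z l)⁻¹ * Real.exp (-((‖v - l • Ω‖ ^ 2 / 2 + V ‖v‖) / σ))) :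
    σ * deriv Z l = Z l * ∫ v, M v * (⟪v, Ω⟫ - l) ∧
      ((∫ v, M v • (v - l • Ω)) = 0 ↔ deriv Z l = 0) := by
  have hE : True := trivial
  set F : ℝ → EuclideanSpace ℝ (Fin d) → ℝ := fun l' v => Real.exp (-((‖v - l' • Ω‖ ^ 2 / 2 + V ‖v‖) / σ)) with hF
  set g : ℝ → ℝ := fun r => (r ^ 2 / 2 + V r - (l + 1) * r) / σ with hg
  -- basic continuity
  have hgcont : Continuous g := by
    exact ((((continuous_pow 2).div_const 2).add hV).sub
      (continuous_const.mul continuous_id)).div_const σ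
  have hgco : Tendsto (fun r : ℝ => g r / r) atTop atTop := by
    have h1 : Tendsto (fun r : ℝ => ((r ^ 2 / 2 + V r) / r + -(l + 1)) / σ) atTop atTop :=
      (tendsto_atTop_add_const_right _ _ hcoerc).atTop_div_const hσ
    refine h1.congr' ?_
    filter_upwards [Ioi_mem_atTop (0 : ℝ)] with r hr
    have hr0 : r ≠ 0 := ne_of_gt hr
    rw [hg]
    field_simp
    ring
  -- norm expansion
  have hexpand : ∀ (x : ℝ) (v : EuclideanSpace ℝ (Fin d)), ‖v - x • Ω‖ ^ 2 = ‖v‖ ^ 2 - 2 * (x * ⟪v, Ω⟫) + x ^ 2 := by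
    intro x v
    rw [@norm_sub_sq_real, real_inner_smul_right, norm_smul, hΩ, mul_one, Real.norm_eq_abs,
      sq_abs]
  -- uniform exponent bound
  have hΦ : ∀ x : ℝ, |x| ≤ l + 1 → ∀ v : EuclideanSpace ℝ (Fin d), g ‖v‖ ≤ (‖v - x • Ω‖ ^ 2 / 2 + V ‖v‖) / σ := by
    intro x hx v
    have h1 : |⟪v, Ω⟫| ≤ ‖v‖ := by
      have h := abs_real_inner_le_norm v Ω
      rwa [hΩ, mul_one] at h
    have h2 : x * ⟪v, Ω⟫ ≤ (l + 1) * ‖v‖ := by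
      calc x * ⟪v, Ω⟫ ≤ |x * ⟪v, Ω⟫| := le_abs_self _
        _ = |x| * |⟪v, Ω⟫| := abs_mul _ _
        _ ≤ (l + 1) * ‖v‖ := mul_le_mul hx h1 (abs_nonneg _) (by linarith)
    simp only [hg]
    apply div_le_div_of_nonneg_right ?_ hσ.le
    rw [hexpand]
    nlinarith [sq_nonneg x]
  -- base integrable dominating function
  have Ibase : Integrable (fun v : EuclideanSpace ℝ (Fin d) =>
      (‖v‖ + (l + 1)) * Real.exp (-g ‖v‖)) := aux_integrable g hgcont hgco (l + 1) (by linarith)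
  have hFcont : ∀ x : ℝ, Continuous (F x) := by
    intro x
    rw [hF]
    fun_prop
  have hFpos : ∀ (x : ℝ) (v : EuclideanSpace ℝ (Fin d)), 0 < F x v := by
    intro x v; exact Real.exp_pos _
  have hFle : ∀ x : ℝ, |x| ≤ l + 1 → ∀ v : EuclideanSpace ℝ (Fin d),
      F x v ≤ Real.exp (-g ‖v‖) := by
    intro x hx v
    rw [hF]
    exact Real.exp_le_exp.mpr (by simpa using neg_le_neg (hΦ x hx v))
  have hFint : ∀ x : ℝ, |x| ≤ l + 1 → Integrable (F x) := by
    intro x hx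
    refine Ibase.mono' (hFcont x).aestronglyMeasurable (ae_of_all _ fun v => ?_)
    rw [Real.norm_eq_abs, abs_of_pos (hFpos x v)]
    refine (hFle x hx v).trans ?_
    nlinarith [Real.exp_pos (-g ‖v‖), norm_nonneg v, Real.exp_le_exp.mpr (le_refl (-g ‖v‖))]
  have habsl : |l| ≤ l + 1 := by rw [abs_of_nonneg hl]; linarith
  -- positivity of Z l
  have hZpos : 0 < Z l := by
    rw [hZ l]
    rw [show (fun v : EuclideanSpace ℝ (Fin d) =>
      Real.exp (-((‖v - l • Ω‖ ^ 2 / 2 + V ‖v‖) / σ))) = F l from rfl]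
    refine (integral_pos_iff_support_of_nonneg (fun v => (hFpos l v).le) (hFint l habsl)).mpr ?_
    have hsupp : Function.support (F l) = Set.univ :=
      Set.eq_univ_of_forall fun v => (hFpos l v).ne'
    rw [hsupp]
    exact isOpen_univ.measure_pos volume ⟨0, trivial⟩
  -- derivative of the integrand
  set F' : ℝ → EuclideanSpace ℝ (Fin d) → ℝ :=
    fun x v => F x v * ((⟪v, Ω⟫ - x) / σ) with hF'
  have hderiv : ∀ (x : ℝ) (v : EuclideanSpace ℝ (Fin d)),
      HasDerivAt (fun y => F y v) (F' x v) x := by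
    intro x v
    have hfun : (fun y => F y v) = fun y : ℝ =>
        Real.exp (-(((‖v‖ ^ 2 - 2 * (y * ⟪v, Ω⟫) + y ^ 2) / 2 + V ‖v‖) / σ)) := by
      funext y
      simp only [hF]
      rw [hexpand]
    rw [hfun]
    have h1 : HasDerivAt (fun y : ℝ => y * ⟪v, Ω⟫) ⟪v, Ω⟫ x := hasDerivAt_mul_const _
    have h2 := h1.const_mul (2 : ℝ)
    have h3 := hasDerivAt_pow 2 x
    have h4 := (h2.const_sub (‖v‖ ^ 2)).add h3
    have h5 := (((h4.div_const 2).add_const (V ‖v‖)).div_const σ).neg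
    have h6 := h5.exp
    have h7 : F' x v = Real.exp (-(((‖v‖ ^ 2 - 2 * (x * ⟪v, Ω⟫) + x ^ 2) / 2 + V ‖v‖) / σ)) *
        (-((-(2 * ⟪v, Ω⟫) + ((2 : ℕ) : ℝ) * x ^ (2 - 1)) / 2 / σ)) := by
      simp only [hF', hF]
      rw [hexpand]
      push_cast
      ring
    rw [h7]
    exact h6
  -- inner product bound
  have hinn : ∀ v : EuclideanSpace ℝ (Fin d), |⟪v, Ω⟫| ≤ ‖v‖ := by
    intro v
    have h := abs_real_inner_le_norm v Ω
    rwa [hΩ, mul_one] at h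
  have hF'cont : Continuous (F' l) := by
    refine (hFcont l).mul (Continuous.div_const (Continuous.sub ?_ continuous_const) σ)
    exact Continuous.inner continuous_id continuous_const
  -- differentiation under the integral sign
  have key := hasDerivAt_integral_of_dominated_loc_of_deriv_le (μ := volume)
    (F := F) (F' := F') (x₀ := l)
    (bound := fun v : EuclideanSpace ℝ (Fin d) =>
      (1 / σ) * ((‖v‖ + (l + 1)) * Real.exp (-g ‖v‖)))
    (Metric.ball_mem_nhds l zero_lt_one)
    (Eventually.of_forall fun x => (hFcont x).aestronglyMeasurable)
    (hFint l habsl)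
    hF'cont.aestronglyMeasurable
    (ae_of_all _ fun v => ?_)
    (Ibase.const_mul (1 / σ))
    (ae_of_all _ fun v x _ => hderiv x v)
  rotate_left
  · -- the bound
    intro x hx
    have hx1 : |x| ≤ l + 1 := by
      have h := abs_sub_abs_le_abs_sub x l
      have h2 : |x - l| < 1 := by rwa [Metric.mem_ball, Real.dist_eq] at hx
      rw [abs_of_nonneg hl] at h
      linarith
    have e1 : ‖F' x v‖ = F x v * |⟪v, Ω⟫ - x| / σ := by
      simp only [hF']
      rw [Real.norm_eq_abs, abs_mul, abs_of_pos (hFpos x v), abs_div, abs_of_pos hσ]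
      ring
    rw [e1]
    have e2 : |⟪v, Ω⟫ - x| ≤ ‖v‖ + (l + 1) := by
      have := abs_sub (⟪v, Ω⟫) x
      calc |⟪v, Ω⟫ - x| ≤ |⟪v, Ω⟫| + |x| := abs_sub _ _
        _ ≤ ‖v‖ + (l + 1) := add_le_add (hinn v) hx1
    calc F x v * |⟪v, Ω⟫ - x| / σ
        ≤ Real.exp (-g ‖v‖) * (‖v‖ + (l + 1)) / σ :=
          div_le_div_of_nonneg_right
            (mul_le_mul (hFle x hx1 v) e2 (abs_nonneg _) (Real.exp_pos _).le) hσ.le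
      _ = 1 / σ * ((‖v‖ + (l + 1)) * Real.exp (-g ‖v‖)) := by ring
  obtain ⟨hF'int, hHasDeriv⟩ := key
  have hZfun : Z = fun x : ℝ => ∫ v, F x v := funext fun x => hZ x
  have hderivZ : deriv Z l = ∫ v, F' l v := by
    rw [hZfun]
    exact hHasDeriv.deriv
  -- Part 1
  set S : ℝ := ∫ v, M v * (⟪v, Ω⟫ - l) with hS
  have e3 : ∀ v : EuclideanSpace ℝ (Fin d), σ * F' l v = F l v * (⟪v, Ω⟫ - l) := by
    intro v
    simp only [hF']
    field_simp
  have e4 : ∀ v : EuclideanSpace ℝ (Fin d),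
      M v * (⟪v, Ω⟫ - l) = (Z l)⁻¹ * (F l v * (⟪v, Ω⟫ - l)) := by
    intro v
    rw [hM]
    simp only [hF]
    ring
  have part1 : σ * deriv Z l = Z l * S := by
    rw [hderivZ, ← integral_const_mul]
    rw [hS]
    simp only [e3, e4]
    rw [integral_const_mul, ← mul_assoc, mul_inv_cancel₀ hZpos.ne', one_mul]
  -- reflection
  set T : EuclideanSpace ℝ (Fin d) ≃ₗᵢ[ℝ] EuclideanSpace ℝ (Fin d) := Submodule.reflection (ℝ ∙ Ω) with hT
  have hTapp : ∀ v, T v = 2 • (⟪Ω, v⟫ • Ω) - v := by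
    intro v
    rw [hT, Submodule.reflection_apply, Submodule.starProjection_unit_singleton ℝ hΩ]
  have hT1 : ∀ v, ⟪T v, Ω⟫ = ⟪v, Ω⟫ := by
    intro v
    rw [hTapp, two_smul]
    simp only [inner_sub_left, inner_add_left, real_inner_smul_left]
    rw [real_inner_self_eq_norm_sq, hΩ]
    have := real_inner_comm v Ω
    nlinarith [real_inner_comm v Ω]
  have hT2 : ∀ v, ‖T v‖ = ‖v‖ := T.norm_map
  have hT3 : T (l • Ω) = l • Ω := by
    rw [hT]
    exact Submodule.reflection_mem_subspace_eq_self
      (Submodule.smul_mem _ l (Submodule.mem_span_singleton_self Ω))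
  have hT4 : ∀ v, ‖T v - l • Ω‖ = ‖v - l • Ω‖ := by
    intro v
    have e : T v - l • Ω = T (v - l • Ω) := by rw [T.map_sub, hT3]
    rw [e, T.norm_map]
  have hT5 : ∀ v, M (T v) = M v := by
    intro v
    rw [hM]
    simp only [hT2, hT4]
  have hT6 : ∀ v, T v - ⟪T v, Ω⟫ • Ω = -(v - ⟪v, Ω⟫ • Ω) := by
    intro v
    rw [hT1, hTapp, two_smul, real_inner_comm Ω v]
    module
  -- the orthogonal part integrates to zero
  have I0 : (∫ v, M v • (v - ⟪v, Ω⟫ • Ω)) = 0 := by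
    have hmp : MeasurePreserving T volume volume := T.measurePreserving
    have hemb : MeasurableEmbedding T := T.toHomeomorph.measurableEmbedding
    have h := hmp.integral_comp hemb (fun v => M v • (v - ⟪v, Ω⟫ • Ω))
    have h2 : ∀ v : EuclideanSpace ℝ (Fin d),
        M (T v) • (T v - ⟪T v, Ω⟫ • Ω) = -(M v • (v - ⟪v, Ω⟫ • Ω)) := by
      intro v
      rw [hT5, hT6, smul_neg]
    simp only [h2] at h
    rw [integral_neg] at h
    have h3 : (2 : ℝ) • (∫ v, M v • (v - ⟪v, Ω⟫ • Ω)) = 0 := by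
      rw [two_smul]
      nth_rewrite 1 [← h]
      exact neg_add_cancel _
    rcases smul_eq_zero.mp h3 with h4 | h4
    · norm_num at h4
    · exact h4
  -- integrability of the pieces
  have hZinv0 : (0:ℝ) ≤ (Z l)⁻¹ := inv_nonneg.mpr hZpos.le
  have hMbound : ∀ v, |M v| ≤ (Z l)⁻¹ * Real.exp (-g ‖v‖) := by
    intro v
    rw [hM]
    rw [abs_mul, abs_of_nonneg hZinv0, abs_of_pos (Real.exp_pos _)]
    exact mul_le_mul_of_nonneg_left (hFle l habsl v) hZinv0
  have hMcont : Continuous M := by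
    rw [hM]
    fun_prop
  have hinncont : Continuous fun v : EuclideanSpace ℝ (Fin d) => ⟪v, Ω⟫ :=
    Continuous.inner continuous_id continuous_const
  have intS : Integrable (fun v : EuclideanSpace ℝ (Fin d) => M v * (⟪v, Ω⟫ - l)) := by
    refine (Ibase.const_mul (Z l)⁻¹).mono'
      ((hMcont.mul (hinncont.sub continuous_const)).aestronglyMeasurable)
      (ae_of_all _ fun v => ?_)
    rw [Real.norm_eq_abs, abs_mul]
    have e2 : |⟪v, Ω⟫ - l| ≤ ‖v‖ + (l + 1) := by
      calc |⟪v, Ω⟫ - l| ≤ |⟪v, Ω⟫| + |l| := abs_sub _ _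
        _ ≤ ‖v‖ + (l + 1) := add_le_add (hinn v) (by rw [abs_of_nonneg hl]; linarith)
    calc |M v| * |⟪v, Ω⟫ - l|
        ≤ ((Z l)⁻¹ * Real.exp (-g ‖v‖)) * (‖v‖ + (l + 1)) :=
          mul_le_mul (hMbound v) e2 (abs_nonneg _) (by positivity)
      _ = (Z l)⁻¹ * ((‖v‖ + (l + 1)) * Real.exp (-g ‖v‖)) := by ring
  have int2 : Integrable (fun v : EuclideanSpace ℝ (Fin d) => M v • (v - ⟪v, Ω⟫ • Ω)) := by
    refine (Ibase.const_mul ((Z l)⁻¹ * 2)).mono'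
      ((hMcont.smul (continuous_id.sub (hinncont.smul continuous_const))).aestronglyMeasurable)
      (ae_of_all _ fun v => ?_)
    rw [norm_smul, Real.norm_eq_abs]
    have e2 : ‖v - ⟪v, Ω⟫ • Ω‖ ≤ 2 * (‖v‖ + (l + 1)) := by
      calc ‖v - ⟪v, Ω⟫ • Ω‖ ≤ ‖v‖ + ‖⟪v, Ω⟫ • Ω‖ := norm_sub_le _ _
        _ = ‖v‖ + |⟪v, Ω⟫| := by rw [norm_smul, Real.norm_eq_abs, hΩ, mul_one]
        _ ≤ ‖v‖ + ‖v‖ := add_le_add le_rfl (hinn v)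
        _ ≤ 2 * (‖v‖ + (l + 1)) := by linarith [norm_nonneg v]
    calc |M v| * ‖v - ⟪v, Ω⟫ • Ω‖
        ≤ ((Z l)⁻¹ * Real.exp (-g ‖v‖)) * (2 * (‖v‖ + (l + 1))) :=
          mul_le_mul (hMbound v) e2 (norm_nonneg _) (by positivity)
      _ = (Z l)⁻¹ * 2 * ((‖v‖ + (l + 1)) * Real.exp (-g ‖v‖)) := by ring
  -- splitting the vector integral
  have hsplit : (∫ v, M v • (v - l • Ω)) = S • Ω := by
    have hptw : ∀ v : EuclideanSpace ℝ (Fin d), M v • (v - l • Ω) =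
        (M v * (⟪v, Ω⟫ - l)) • Ω + M v • (v - ⟪v, Ω⟫ • Ω) := by
      intro v
      rw [mul_smul, ← smul_add]
      congr 1
      module
    simp only [hptw]
    rw [integral_add (intS.smul_const Ω) int2, I0, add_zero, integral_smul_const]
  have hΩ0 : Ω ≠ 0 := by
    intro h
    rw [h, norm_zero] at hΩ
    norm_num at hΩ
  refine ⟨part1, ?_⟩
  rw [hsplit]
  constructor
  · intro h
    have hS0 : S = 0 := by
      rcases smul_eq_zero.mp h with h' | h'
      · exact h'
      · exact absurd h' hΩ0
    have h5 := part1
    rw [hS0, mul_zero] at h5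
    rcases mul_eq_zero.mp h5 with h'' | h''
    · exact absurd h'' hσ.ne'
    · exact h''
  · intro h
    have h5 : Z l * S = 0 := by rw [← part1, h, mul_zero]
    have hS0 : S = 0 := by
      rcases mul_eq_zero.mp h5 with h' | h'
      · exact absurd h' hZpos.ne'
      · exact h'
    rw [hS0, zero_smul]
end

section
/- Under the hypotheses that V ∈ C², v ↦ |v|²/2 + V(|v|) is strictly convex and coercive, and V′ < 0 on ]0,r₀[, V′ > 0 on ]r₀,∞[: for 0 < |u| < r₀ the unique minimizer v̄ of Φ_u satisfies (v̄ − u)·(u/|u|) = −V′(|v̄|) > 0, and for |u| > r₀ it satisfies (v̄ − u)·(u/|u|) = −V′(|v̄|) < 0. -/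
open Real Filter
open scoped RealInnerProductSpace

lemma key_aux {d : ℕ} (V : ℝ → ℝ) (hV : ContDiff ℝ 2 V)
    (r₀ : ℝ) (hr₀ : 0 < r₀)
    (hneg : ∀ r, 0 < r → r < r₀ → deriv V r < 0)
    (u vb : EuclideanSpace ℝ (Fin d))
    (hmin : ∀ v, ‖vb - u‖ ^ 2 / 2 + V ‖vb‖ ≤ ‖v - u‖ ^ 2 / 2 + V ‖v‖)
    (ha : 0 < ‖u‖) :
    0 < ‖vb‖ ∧ ‖vb‖ + deriv V ‖vb‖ = ‖u‖ ∧
      ⟪vb - u, ‖u‖⁻¹ • u⟫ = -deriv V ‖vb‖ := by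
  set a := ‖u‖ with ha_def
  set s := ‖vb‖ with hs_def
  have hVd : Differentiable ℝ V := hV.differentiable (by norm_num)
  have hV'c : Continuous (deriv V) := hV.continuous_deriv (by norm_num)
  set g : ℝ → ℝ := fun t => (t - a) ^ 2 / 2 + V t with hg
  have hgd : ∀ t : ℝ, HasDerivAt g ((t - a) + deriv V t) t := by
    intro t
    have h1 : HasDerivAt (fun t : ℝ => (t - a) ^ 2 / 2) (t - a) t := by
      have h := (((hasDerivAt_id t).sub_const a).pow 2).div_const 2
      simp only [id_eq, Pi.pow_apply] at h
      refine h.congr_deriv ?_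
      ring
    exact h1.add (hVd t).hasDerivAt
  -- norms of points on the ray through u
  have hray : ∀ t : ℝ, 0 ≤ t →
      ‖t • ((a : ℝ)⁻¹ • u) - u‖ = |t - a| ∧ ‖t • ((a : ℝ)⁻¹ • u)‖ = t := by
    intro t ht
    constructor
    · have h1 : t • ((a : ℝ)⁻¹ • u) - u = (t * a⁻¹ - 1) • u := by
        rw [sub_smul, smul_smul, one_smul]
      rw [h1, norm_smul, Real.norm_eq_abs]
      have : |t * a⁻¹ - 1| * a = |(t * a⁻¹ - 1) * a| := by
        rw [abs_mul, abs_of_pos ha]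
      rw [this]
      congr 1
      field_simp
    · rw [norm_smul, norm_smul, Real.norm_eq_abs, Real.norm_eq_abs,
        abs_of_nonneg ht, abs_of_nonneg (inv_nonneg.2 ha.le)]
      field_simp
      rfl
  -- reverse triangle inequality
  have htri : |s - a| ≤ ‖vb - u‖ := by
    simpa using abs_norm_sub_norm_le vb u
  -- g s ≤ g t for t ≥ 0
  have hgs : ∀ t : ℝ, 0 ≤ t → g s ≤ g t := by
    intro t ht
    have h := hmin (t • ((a : ℝ)⁻¹ • u))
    obtain ⟨h1, h2⟩ := hray t ht
    rw [h1, h2] at h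
    have hsq : (s - a) ^ 2 ≤ ‖vb - u‖ ^ 2 := by
      calc (s - a) ^ 2 = |s - a| ^ 2 := (sq_abs _).symm
        _ ≤ ‖vb - u‖ ^ 2 := pow_le_pow_left₀ (abs_nonneg _) htri 2
    have habs : |t - a| ^ 2 = (t - a) ^ 2 := sq_abs _
    simp only [hg]
    nlinarith [h]
  -- s > 0
  have hs0 : 0 < s := by
    rcases lt_or_eq_of_le (norm_nonneg vb) with h | h
    · exact h
    exfalso
    have hs_eq : s = 0 := h.symm
    set t : ℝ := min a r₀ / 2 with ht_def
    have hmin0 : 0 < min a r₀ := lt_min ha hr₀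
    have ht0 : 0 < t := by positivity
    have hta : t < a := by
      have := min_le_left a r₀; simp only [ht_def]; linarith
    have htr : t < r₀ := by
      have := min_le_right a r₀; simp only [ht_def]; linarith
    obtain ⟨ξ, hξ, hξd⟩ := exists_hasDerivAt_eq_slope g (fun t => (t - a) + deriv V t) ht0
      (fun x _ => (hgd x).continuousAt.continuousWithinAt) (fun x _ => hgd x)
    have hξ1 : 0 < ξ := hξ.1
    have hξ2 : ξ < t := hξ.2
    have hd_neg : (ξ - a) + deriv V ξ < 0 := by
      have := hneg ξ hξ1 (hξ2.trans htr)
      linarith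
    have hslope : (g t - g 0) / (t - 0) < 0 := hξd ▸ hd_neg
    have : g t < g 0 := by
      have h := (div_neg_iff.mp hslope)
      rcases h with ⟨h1, h2⟩ | ⟨h1, h2⟩
      · linarith
      · linarith
    have := hgs t ht0.le
    rw [hs_eq] at this
    linarith
  -- first-order condition
  have hloc : IsLocalMin g s := by
    filter_upwards [Ioi_mem_nhds hs0] with t ht
    exact hgs t (le_of_lt ht)
  have hderiv0 : (s - a) + deriv V s = 0 := by
    have := hloc.deriv_eq_zero
    rwa [(hgd s).deriv] at this
  have heq : s + deriv V s = a := by linarith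
  refine ⟨hs0, heq, ?_⟩
  -- equality in the triangle inequality
  have hle : ‖vb - u‖ ^ 2 ≤ (s - a) ^ 2 := by
    have h := hmin (s • ((a : ℝ)⁻¹ • u))
    obtain ⟨h1, h2⟩ := hray s hs0.le
    rw [h1, h2] at h
    nlinarith [h, sq_abs (s - a)]
  have hge : (s - a) ^ 2 ≤ ‖vb - u‖ ^ 2 := by
    calc (s - a) ^ 2 = |s - a| ^ 2 := (sq_abs _).symm
      _ ≤ ‖vb - u‖ ^ 2 := pow_le_pow_left₀ (abs_nonneg _) htri 2
  have heqn : ‖vb - u‖ ^ 2 = (s - a) ^ 2 := le_antisymm hle hge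
  have hexp : ‖vb - u‖ ^ 2 = s ^ 2 - 2 * ⟪vb, u⟫ + a ^ 2 := by
    rw [@norm_sub_sq_real]
  have hinner_ub : ⟪vb, u⟫ = s * a := by nlinarith [heqn, hexp]
  have huu : ⟪u, u⟫ = a ^ 2 := real_inner_self_eq_norm_sq u
  rw [inner_sub_left, real_inner_smul_right, real_inner_smul_right, hinner_ub, huu]
  field_simp
  nlinarith [heq]

/-- For `0 < |u| < r₀` the unique minimizer `v̄` of `Φ_u` satisfies
`(v̄ − u)·(u/|u|) = −V′(|v̄|) > 0`, and for `|u| > r₀` it satisfies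
`(v̄ − u)·(u/|u|) = −V′(|v̄|) < 0`. -/
theorem stmt10 {d : ℕ} (hd : 1 ≤ d) (V : ℝ → ℝ) (hV : ContDiff ℝ 2 V)
    (hconv : StrictConvexOn ℝ Set.univ
      (fun v : EuclideanSpace ℝ (Fin d) => ‖v‖ ^ 2 / 2 + V ‖v‖))
    (hcoerc : Tendsto (fun r : ℝ => (r ^ 2 / 2 + V r) / r) atTop atTop)
    (r₀ : ℝ) (hr₀ : 0 < r₀)
    (hneg : ∀ r, 0 < r → r < r₀ → deriv V r < 0)
    (hpos : ∀ r, r₀ < r → 0 < deriv V r)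
    (u vb : EuclideanSpace ℝ (Fin d))
    (hmin : ∀ v, ‖vb - u‖ ^ 2 / 2 + V ‖vb‖ ≤ ‖v - u‖ ^ 2 / 2 + V ‖v‖) :
    (0 < ‖u‖ → ‖u‖ < r₀ →
      ⟪vb - u, ‖u‖⁻¹ • u⟫ = -deriv V ‖vb‖ ∧ 0 < -deriv V ‖vb‖) ∧
    (r₀ < ‖u‖ →
      ⟪vb - u, ‖u‖⁻¹ • u⟫ = -deriv V ‖vb‖ ∧ -deriv V ‖vb‖ < 0) := by
  have hV'c : Continuous (deriv V) := hV.continuous_deriv (by norm_num)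
  -- boundary values of the derivative at r₀
  have hVr0_ge : 0 ≤ deriv V r₀ := by
    have htend : Tendsto (deriv V) (nhdsWithin r₀ (Set.Ioi r₀)) (nhds (deriv V r₀)) :=
      (hV'c.continuousAt.tendsto).mono_left nhdsWithin_le_nhds
    refine ge_of_tendsto htend ?_
    filter_upwards [self_mem_nhdsWithin] with y hy
    exact (hpos y hy).le
  have hVr0_le : deriv V r₀ ≤ 0 := by
    have htend : Tendsto (deriv V) (nhdsWithin r₀ (Set.Iio r₀)) (nhds (deriv V r₀)) :=
      (hV'c.continuousAt.tendsto).mono_left nhdsWithin_le_nhds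
    refine le_of_tendsto htend ?_
    have hmem : Set.Ioo 0 r₀ ∈ nhdsWithin r₀ (Set.Iio r₀) := by
      have h : Set.Ioi (0:ℝ) ∩ Set.Iio r₀ ∈ nhdsWithin r₀ (Set.Iio r₀) :=
        Filter.inter_mem (nhdsWithin_le_nhds (Ioi_mem_nhds hr₀)) self_mem_nhdsWithin
      simpa [Set.Ioi_inter_Iio] using h
    filter_upwards [hmem] with y hy
    exact (hneg y hy.1 hy.2).le
  constructor
  · intro ha hlt
    obtain ⟨hs0, heq, hinner⟩ := key_aux V hV r₀ hr₀ hneg u vb hmin ha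
    have hslt : ‖vb‖ < r₀ := by
      by_contra h
      push_neg at h
      have hV'nn : 0 ≤ deriv V ‖vb‖ := by
        rcases lt_or_eq_of_le h with h' | h'
        · exact (hpos _ h').le
        · rw [← h']; exact hVr0_ge
      linarith
    exact ⟨hinner, by linarith [hneg _ hs0 hslt]⟩
  · intro ha
    obtain ⟨hs0, heq, hinner⟩ := key_aux V hV r₀ hr₀ hneg u vb hmin (hr₀.trans ha)
    have hsgt : r₀ < ‖vb‖ := by
      by_contra h
      push_neg at h
      have hV'np : deriv V ‖vb‖ ≤ 0 := by
        rcases lt_or_eq_of_le h with h' | h'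
        · exact (hneg _ hs0 h').le
        · rw [h']; exact hVr0_le
      linarith
    exact ⟨hinner, by linarith [hpos _ hsgt]⟩
end
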